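/- Suppose G : ℤ² → ℝ satisfies (i) G(γ(z)) = G(z) for every γ ∈ D₃ and z ∈ ℤ², and (ii) ΔG(z) = −1 if z = (0,0) and ΔG(z) = 0 for every z ≠ (0,0). Fix z₀ = (x₀, y₀) with x₀ ≥ 1 and y₀ ≥ 1, and define G_W(z) = Σ_{γ ∈ D₃} sgn(γ) · G(z − γ(z₀)). Then: (a) G_W(z) = 0 for every z lying on either coordinate axis (z = (x,0) or z = (0,y) for some integer x or y); and (b) ΔG_W(z) = −1 if z = z₀ and ΔG_W(z) = 0 for every other z with both coordinates ≥ 1. In particular G_W is the Dirichlet Green's function of the 60° wedge (the quadrant in sheared coordinates) with pole at z₀. -/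

import Mathlib

/-- The discrete triangular-lattice Laplacian, in the sheared coordinates in which the
60° wedge becomes the quadrant. -/
noncomputable def lap (f : ℤ × ℤ → ℝ) (z : ℤ × ℤ) : ℝ :=
  (1/3) * (f (z + (1, 0)) + f (z + (-1, 1)) + f (z + (0, -1))) - f z

/-- Rotation by 120° in sheared coordinates. -/
def rot (p : ℤ × ℤ) : ℤ × ℤ := (-p.1 - p.2, p.1)

/-- Reflection fixing the vertical axis, in sheared coordinates. -/
def refl3 (p : ℤ × ℤ) : ℤ × ℤ := (-p.1, p.1 + p.2)

/-- The dihedral group `D₃ = {id, r, r², s, s∘r, s∘r²}`, each element paired with its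
sign (`+1` for rotations, `−1` for reflections). -/
noncomputable def D3 : List ((ℤ × ℤ → ℤ × ℤ) × ℝ) :=
  [(id, 1), (rot, 1), (rot ∘ rot, 1), (refl3, -1), (refl3 ∘ rot, -1), (refl3 ∘ rot ∘ rot, -1)]

/-- The method-of-images function `G_W(z) = Σ_{γ ∈ D₃} sgn(γ) G(z − γ(z₀))`. -/
noncomputable def GW (G : ℤ × ℤ → ℝ) (z₀ : ℤ × ℤ) (z : ℤ × ℤ) : ℝ :=
  (D3.map (fun γ => γ.2 * G (z - γ.1 z₀))).sum

/-- The Laplacian commutes with the alternating sum over images. -/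
lemma lap_GW (G : ℤ × ℤ → ℝ) (z₀ z : ℤ × ℤ) :
    lap (GW G z₀) z = lap G (z - z₀) + lap G (z - rot z₀) + lap G (z - rot (rot z₀))
      - lap G (z - refl3 z₀) - lap G (z - refl3 (rot z₀)) - lap G (z - refl3 (rot (rot z₀))) := by
  simp only [lap, GW, D3, List.map_cons, List.map_nil, List.sum_cons, List.sum_nil,
    Function.comp, id]
  ring_nf

/-- If `G` is `D₃`-invariant and satisfies `ΔG = −δ₀` on `ℤ²`, then for interior `z₀`
the alternating sum `G_W(z) = Σ_{γ ∈ D₃} sgn(γ) G(z − γ(z₀))` vanishes on both coordinate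
axes and satisfies `ΔG_W = −δ_{z₀}` in the open quadrant: it is the Dirichlet Green's
function of the 60° wedge with pole at `z₀`. -/
theorem wedge_green_function (G : ℤ × ℤ → ℝ)
    (hinv : ∀ γ ∈ D3, ∀ z : ℤ × ℤ, G (γ.1 z) = G z)
    (hlap0 : lap G (0, 0) = -1)
    (hlap : ∀ z : ℤ × ℤ, z ≠ (0, 0) → lap G z = 0)
    (z₀ : ℤ × ℤ) (hx : 1 ≤ z₀.1) (hy : 1 ≤ z₀.2) :
    (∀ x : ℤ, GW G z₀ (x, 0) = 0) ∧ (∀ y : ℤ, GW G z₀ (0, y) = 0) ∧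
    lap (GW G z₀) z₀ = -1 ∧
    (∀ z : ℤ × ℤ, 1 ≤ z.1 → 1 ≤ z.2 → z ≠ z₀ → lap (GW G z₀) z = 0) := by
  have hS : ∀ p : ℤ × ℤ, G (refl3 p) = G p := by
    have := hinv (refl3, -1) (by simp [D3])
    simpa using this
  have hSR : ∀ p : ℤ × ℤ, G (refl3 (rot p)) = G p := by
    have := hinv (refl3 ∘ rot, -1) (by simp [D3])
    simpa using this
  obtain ⟨a, b⟩ := z₀
  simp only at hx hy
  have hzero : ((0, 0) : ℤ × ℤ) = 0 := rfl
  refine ⟨?_, ?_, ?_, ?_⟩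
  · intro x
    have h1 := hSR (x - a, 0 - b)
    have h2 := hSR (x - (-a - b), 0 - a)
    have h3 := hSR (x - b, 0 - (-a - b))
    simp only [refl3, rot, GW, D3, List.map_cons, List.map_nil, List.sum_cons, List.sum_nil,
      Function.comp, id, Prod.mk_sub_mk] at *
    ring_nf at *
    linarith
  · intro y
    have h1 := hS (0 - a, y - b)
    have h2 := hS (0 - (-a - b), y - a)
    have h3 := hS (0 - b, y - (-a - b))
    simp only [refl3, rot, GW, D3, List.map_cons, List.map_nil, List.sum_cons, List.sum_nil,
      Function.comp, id, Prod.mk_sub_mk] at *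
    ring_nf at *
    linarith
  · rw [lap_GW]
    rw [show ((a, b) : ℤ × ℤ) - (a, b) = (0, 0) by simp; rfl]
    rw [hlap0]
    rw [hlap _ (by simp [rot, Prod.ext_iff, Prod.mk_sub_mk]; omega),
      hlap _ (by simp [rot, Prod.ext_iff, Prod.mk_sub_mk]; omega),
      hlap _ (by simp [rot, refl3, Prod.ext_iff, Prod.mk_sub_mk]; omega),
      hlap _ (by simp [rot, refl3, Prod.ext_iff, Prod.mk_sub_mk]; omega),
      hlap _ (by simp [rot, refl3, Prod.ext_iff, Prod.mk_sub_mk]; omega)]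
    ring
  · rintro ⟨x, y⟩ hx1 hy1 hne
    simp only at hx1 hy1
    have hne' : x ≠ a ∨ y ≠ b := by
      by_contra h
      push_neg at h
      exact hne (by simp [h.1, h.2])
    rw [lap_GW]
    rw [hlap _ (by simp [Prod.ext_iff, Prod.mk_sub_mk]; omega),
      hlap _ (by simp [rot, Prod.ext_iff, Prod.mk_sub_mk]; omega),
      hlap _ (by simp [rot, Prod.ext_iff, Prod.mk_sub_mk]; omega),
      hlap _ (by simp [rot, refl3, Prod.ext_iff, Prod.mk_sub_mk]; omega),
      hlap _ (by simp [rot, refl3, Prod.ext_iff, Prod.mk_sub_mk]; omega),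
      hlap _ (by simp [rot, refl3, Prod.ext_iff, Prod.mk_sub_mk]; omega)]
    ring
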